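/- Two unbounded atomic generalized Boolean algebras with no maximal element, in each of which every infinite element splits into two disjoint infinite parts and every element is disjoint from some infinite element, satisfy: for any tuple assignments with matching cell-cardinality invariants (each Venn cell having the same finite number of atoms, or both infinite), the tuples can be extended by one more element on either side preserving the invariants (the back-and-forth extension lemma). -/

import Mathlib

/-- An element of a generalized Boolean algebra is *infinite* if it is not the join of
finitely many atoms. -/
def InfiniteElt {α : Type*} [GeneralizedBooleanAlgebra α] (u : α) : Prop :=
  ¬ ∃ F : Finset α, (∀ a ∈ F, IsAtom a) ∧ F.sup id = u

/-- `x` and `y` have the same number of atoms below them: either both sets of atoms are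
infinite, or both are finite of the same size. -/
def SameAtomCount {α β : Type*} [GeneralizedBooleanAlgebra α] [GeneralizedBooleanAlgebra β]
    (x : α) (y : β) : Prop :=
  ({a : α | IsAtom a ∧ a ≤ x}.Finite ↔ {b : β | IsAtom b ∧ b ≤ y}.Finite) ∧
  {a : α | IsAtom a ∧ a ≤ x}.ncard = {b : β | IsAtom b ∧ b ≤ y}.ncard

/-- The Venn-diagram cell of a tuple `a` determined by a nonempty set `S` of indices:
the meet of the `a i` for `i ∈ S` minus the join of the remaining `a i`. -/
def vennCell {α : Type*} [GeneralizedBooleanAlgebra α] {n : ℕ} (a : Fin n → α)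
    (S : Finset (Fin n)) (hS : S.Nonempty) : α :=
  (S.inf' hS a) \ (Sᶜ.sup a)

/-- Two tuples have matching invariants when corresponding Venn cells have the same
number of atoms (a common finite number, or both infinite). -/
def MatchingInvariants {α β : Type*} [GeneralizedBooleanAlgebra α]
    [GeneralizedBooleanAlgebra β] {n : ℕ} (a : Fin n → α) (b : Fin n → β) : Prop :=
  ∀ (S : Finset (Fin n)) (hS : S.Nonempty),
    SameAtomCount (vennCell a S hS) (vennCell b S hS)

set_option linter.unusedSectionVars false
section Aux
variable {α : Type*} [GeneralizedBooleanAlgebra α]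

def atomsBelow (x : α) : Set α := {p : α | IsAtom p ∧ p ≤ x}

lemma atom_le_sup_aux {p : α} (hp : IsAtom p) {x y : α} (h : p ≤ x ⊔ y) :
    p ≤ x ∨ p ≤ y := by
  have h1 : p = (p ⊓ x) ⊔ (p ⊓ y) := by
    rw [← inf_sup_left, inf_eq_left.mpr h]
  rcases (hp.le_iff.mp (inf_le_left : p ⊓ x ≤ p)) with h2 | h2
  · right
    rw [h2, bot_sup_eq] at h1
    exact h1.le.trans inf_le_right
  · left; exact h2.ge.trans inf_le_right

lemma atom_le_finsetSup {p : α} (hp : IsAtom p) {F : Finset α} (hF : ∀ a ∈ F, IsAtom a) :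
    p ≤ F.sup id ↔ p ∈ F := by
  classical
  constructor
  · intro h
    induction F using Finset.induction with
    | empty => exact absurd (le_bot_iff.mp h) hp.1
    | @insert x s hx ih =>
      rw [Finset.sup_insert] at h
      rcases atom_le_sup_aux hp h with h1 | h1
      · have := ((hF x (Finset.mem_insert_self x s)).le_iff_eq hp.1).mp h1
        simp [this]
      · exact Finset.mem_insert_of_mem (ih (fun a ha => hF a (Finset.mem_insert_of_mem ha)) h1)
  · intro h
    exact Finset.le_sup (f := id) h

lemma atomsBelow_finsetSup {F : Finset α} (hF : ∀ a ∈ F, IsAtom a) :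
    atomsBelow (F.sup id) = ↑F := by
  ext p
  simp only [atomsBelow, Set.mem_setOf_eq, Finset.mem_coe]
  constructor
  · rintro ⟨hp, hle⟩; exact (atom_le_finsetSup hp hF).mp hle
  · intro h; exact ⟨hF p h, Finset.le_sup (f := id) h⟩

variable [IsAtomic α]

lemma eq_sup_of_atomsBelow_finite {x : α} (hx : (atomsBelow x).Finite) :
    x = hx.toFinset.sup id := by
  have hsub : hx.toFinset.sup id ≤ x := by
    refine Finset.sup_le fun p hp => (hx.mem_toFinset.mp hp).2
  have hbot : x \ hx.toFinset.sup id = ⊥ := by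
    by_contra h
    rcases (IsAtomic.eq_bot_or_exists_atom_le (x \ hx.toFinset.sup id)).resolve_left h with
      ⟨p, hp, hple⟩
    have hpx : p ≤ x := hple.trans sdiff_le
    have hmem : p ∈ hx.toFinset := hx.mem_toFinset.mpr ⟨hp, hpx⟩
    have h1 : p ≤ hx.toFinset.sup id := Finset.le_sup (f := id) hmem
    have h2 : Disjoint p (hx.toFinset.sup id) :=
      disjoint_sdiff_self_left.mono_left hple
    exact hp.1 (h2.eq_bot_of_le h1)
  exact le_antisymm (sdiff_eq_bot_iff.mp hbot) hsub

lemma infiniteElt_iff {x : α} : InfiniteElt x ↔ (atomsBelow x).Infinite := by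
  rw [← not_iff_not, InfiniteElt, not_not, Set.not_infinite]
  constructor
  · rintro ⟨F, hF, rfl⟩
    rw [atomsBelow_finsetSup hF]
    exact F.finite_toSet
  · intro hfin
    exact ⟨hfin.toFinset, fun p hp => (hfin.mem_toFinset.mp hp).1,
      (eq_sup_of_atomsBelow_finite hfin).symm⟩

lemma atomsBelow_sup_disjoint {x y : α} (h : x ⊓ y = ⊥) :
    atomsBelow (x ⊔ y) = atomsBelow x ∪ atomsBelow y ∧
      Disjoint (atomsBelow x) (atomsBelow y) := by
  constructor
  · ext p
    simp only [atomsBelow, Set.mem_setOf_eq, Set.mem_union]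
    constructor
    · rintro ⟨hp, hle⟩
      rcases atom_le_sup_aux hp hle with h1 | h1
      · exact Or.inl ⟨hp, h1⟩
      · exact Or.inr ⟨hp, h1⟩
    · rintro (⟨hp, h1⟩ | ⟨hp, h1⟩)
      · exact ⟨hp, h1.trans le_sup_left⟩
      · exact ⟨hp, h1.trans le_sup_right⟩
  · rw [Set.disjoint_left]
    rintro p ⟨hp, h1⟩ ⟨_, h2⟩
    exact hp.1 (le_bot_iff.mp ((le_inf h1 h2).trans h.le))

end Aux

section Cells
variable {α : Type*} [GeneralizedBooleanAlgebra α] {n : ℕ}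

def vennCell' {α : Type*} [GeneralizedBooleanAlgebra α] {n : ℕ} (a : Fin n → α)
    (S : Finset (Fin n)) (hS : S.Nonempty) : α :=
  (S.inf' hS a) \ (Sᶜ.sup a)

lemma vennCell'_le {a : Fin n → α} {S : Finset (Fin n)} (hS : S.Nonempty) {i : Fin n}
    (hi : i ∈ S) : vennCell' a S hS ≤ a i :=
  sdiff_le.trans (Finset.inf'_le a hi)

lemma vennCell'_disjoint_of_not_mem {a : Fin n → α} {S : Finset (Fin n)} (hS : S.Nonempty)
    {i : Fin n} (hi : i ∉ S) : Disjoint (vennCell' a S hS) (a i) :=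
  disjoint_sdiff_self_left.mono_right (Finset.le_sup (Finset.mem_compl.mpr hi))

lemma vennCell'_disjoint_aux {a : Fin n → α} {S T : Finset (Fin n)} (hS : S.Nonempty)
    (hT : T.Nonempty) {i : Fin n} (hiS : i ∈ S) (hiT : i ∉ T) :
    Disjoint (vennCell' a S hS) (vennCell' a T hT) :=
  ((vennCell'_disjoint_of_not_mem hT hiT).symm.mono_left (vennCell'_le hS hiS))

lemma vennCell'_disjoint {a : Fin n → α} {S T : Finset (Fin n)} (hS : S.Nonempty)
    (hT : T.Nonempty) (hne : S ≠ T) :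
    Disjoint (vennCell' a S hS) (vennCell' a T hT) := by
  have : ¬ S ⊆ T ∨ ¬ T ⊆ S := by
    by_contra h; push_neg at h; exact hne (Finset.Subset.antisymm h.1 h.2)
  rcases this with h | h
  · obtain ⟨i, hiS, hiT⟩ := Finset.not_subset.mp h
    exact vennCell'_disjoint_aux hS hT hiS hiT
  · obtain ⟨i, hiT, hiS⟩ := Finset.not_subset.mp h
    exact (vennCell'_disjoint_aux hT hS hiT hiS).symm

end Cells

section Snoc
variable {α : Type*} [GeneralizedBooleanAlgebra α] {n : ℕ} (a : Fin n → α) (c : α)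

open Finset

lemma compl_map_castSucc (S : Finset (Fin n)) :
    (S.map Fin.castSuccEmb)ᶜ = insert (Fin.last n) (Sᶜ.map Fin.castSuccEmb) := by
  ext j
  simp only [mem_compl, mem_map, Fin.coe_castSuccEmb, mem_insert]
  refine Fin.lastCases ?_ ?_ j <;> simp [Fin.castSucc_lt_last, (Fin.castSucc_lt_last _).ne]

lemma compl_insert_last (S : Finset (Fin n)) :
    (insert (Fin.last n) (S.map Fin.castSuccEmb))ᶜ = Sᶜ.map Fin.castSuccEmb := by
  rw [Finset.insert_eq, Finset.compl_union, compl_map_castSucc]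
  ext j
  simp only [mem_inter, mem_compl, mem_singleton, mem_insert, mem_map, Fin.coe_castSuccEmb]
  constructor
  · rintro ⟨hj, h | ⟨i, hi, rfl⟩⟩
    · exact absurd h hj
    · exact ⟨i, hi, rfl⟩
  · rintro ⟨i, hi, rfl⟩
    exact ⟨(Fin.castSucc_lt_last i).ne, Or.inr ⟨i, hi, rfl⟩⟩

lemma sup_map_snoc (S : Finset (Fin n)) :
    (S.map Fin.castSuccEmb).sup (Fin.snoc a c : Fin (n+1) → α) = S.sup a := by
  rw [Finset.sup_map]
  exact Finset.sup_congr rfl (fun i _ => by simp [Fin.snoc_castSucc])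

lemma inf'_map_snoc (S : Finset (Fin n)) (hS : S.Nonempty)
    (h : (S.map Fin.castSuccEmb).Nonempty) :
    (S.map Fin.castSuccEmb).inf' h (Fin.snoc a c : Fin (n+1) → α) = S.inf' hS a := by
  rw [Finset.inf'_map]
  exact Finset.inf'_congr _ rfl (fun i _ => by simp [Fin.snoc_castSucc])

lemma vennCell'_snoc_notlast (S : Finset (Fin n)) (hS : S.Nonempty) (h : (S.map Fin.castSuccEmb).Nonempty) :
    vennCell' (Fin.snoc a c) (S.map Fin.castSuccEmb) h = vennCell' a S hS \ c := by
  unfold vennCell'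
  rw [compl_map_castSucc, Finset.sup_insert, sup_map_snoc]
  have h1 : (S.map Fin.castSuccEmb).inf' h (Fin.snoc a c : Fin (n+1) → α) = S.inf' hS a :=
    inf'_map_snoc a c S hS h
  rw [h1, Fin.snoc_last, sup_comm, ← _root_.sdiff_sdiff_left]

lemma vennCell'_snoc_last (h : ({Fin.last n} : Finset (Fin (n+1))).Nonempty) :
    vennCell' (Fin.snoc a c) {Fin.last n} h = c \ Finset.univ.sup a := by
  unfold vennCell'
  have h1 : ({Fin.last n} : Finset (Fin (n+1)))ᶜ = Finset.univ.map Fin.castSuccEmb := by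
    have := compl_insert_last (∅ : Finset (Fin n))
    simpa using this
  rw [h1, sup_map_snoc]
  simp [Fin.snoc_last]

lemma vennCell'_snoc_last_mem (S : Finset (Fin n)) (hS : S.Nonempty)
    (h : (insert (Fin.last n) (S.map Fin.castSuccEmb)).Nonempty) :
    vennCell' (Fin.snoc a c) (insert (Fin.last n) (S.map Fin.castSuccEmb)) h =
      vennCell' a S hS ⊓ c := by
  classical
  unfold vennCell'
  rw [compl_insert_last, sup_map_snoc, Finset.inf'_insert, Fin.snoc_last,
    inf'_map_snoc a c S hS hS.map]
  · rw [inf_sdiff_assoc, inf_comm]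
  · exact hS.map

end Snoc

section Decomp
variable {n : ℕ}
open Finset

lemma mem_map_castSucc_iff (S : Finset (Fin n)) (i : Fin n) :
    Fin.castSucc i ∈ S.map Fin.castSuccEmb ↔ i ∈ S := by
  simp only [mem_map, Fin.coe_castSuccEmb]
  constructor
  · rintro ⟨k, hk, hki⟩
    rwa [← Fin.castSucc_injective n hki]
  · intro h; exact ⟨i, h, rfl⟩

lemma last_not_mem_map (S : Finset (Fin n)) :
    Fin.last n ∉ S.map Fin.castSuccEmb := by
  simp only [mem_map, Fin.coe_castSuccEmb]
  rintro ⟨k, _, hk⟩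
  exact (Fin.castSucc_lt_last k).ne hk

lemma finset_fin_succ_cases (T : Finset (Fin (n+1))) (hT : T.Nonempty) :
    (∃ S : Finset (Fin n), ∃ hS : S.Nonempty, T = S.map Fin.castSuccEmb) ∨
    T = {Fin.last n} ∨
    (∃ S : Finset (Fin n), ∃ hS : S.Nonempty, T = insert (Fin.last n) (S.map Fin.castSuccEmb)) := by
  classical
  set S : Finset (Fin n) := univ.filter (fun i => Fin.castSucc i ∈ T) with hSdef
  have hmemS : ∀ i : Fin n, i ∈ S ↔ Fin.castSucc i ∈ T := by
    intro i; simp [hSdef]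
  by_cases hlast : Fin.last n ∈ T
  · by_cases hSne : S.Nonempty
    · refine Or.inr (Or.inr ⟨S, hSne, ?_⟩)
      ext j
      refine Fin.lastCases ?_ ?_ j
      · simp [hlast]
      · intro i
        rw [mem_insert, mem_map_castSucc_iff, hmemS]
        simp [(Fin.castSucc_lt_last i).ne]
    · refine Or.inr (Or.inl ?_)
      ext j
      refine Fin.lastCases ?_ ?_ j
      · simp [hlast]
      · intro i
        have : i ∉ S := fun h => hSne ⟨i, h⟩
        rw [hmemS] at this
        simp [this, (Fin.castSucc_lt_last i).ne]
  · obtain ⟨j, hj⟩ := hT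
    have hjne : j ≠ Fin.last n := fun h => hlast (h ▸ hj)
    obtain ⟨i, rfl⟩ := Fin.exists_castSucc_eq.mpr hjne
    refine Or.inl ⟨S, ⟨i, (hmemS i).mpr hj⟩, ?_⟩
    ext j'
    refine Fin.lastCases ?_ ?_ j'
    · exact iff_of_false hlast (last_not_mem_map S)
    · intro i'
      rw [mem_map_castSucc_iff, hmemS]

end Decomp

def SameAtomCount' {α β : Type*} [GeneralizedBooleanAlgebra α] [GeneralizedBooleanAlgebra β]
    (x : α) (y : β) : Prop :=
  ((atomsBelow x).Finite ↔ (atomsBelow y).Finite) ∧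
  (atomsBelow x).ncard = (atomsBelow y).ncard

section Two
variable {α β : Type*} [GeneralizedBooleanAlgebra α] [GeneralizedBooleanAlgebra β]
  [IsAtomic α] [IsAtomic β]

lemma sac_of_infinite {x : α} {y : β} (hx : (atomsBelow x).Infinite)
    (hy : (atomsBelow y).Infinite) : SameAtomCount' x y :=
  ⟨iff_of_false hx hy, by rw [hx.ncard, hy.ncard]⟩

lemma sac_of_finite {x : α} {y : β} (hx : (atomsBelow x).Finite)
    (hy : (atomsBelow y).Finite) (h : (atomsBelow x).ncard = (atomsBelow y).ncard) :
    SameAtomCount' x y :=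
  ⟨iff_of_true hx hy, h⟩

lemma atomsBelow_sdiff_sup {α : Type*} [GeneralizedBooleanAlgebra α] {Y : α} {Tf : Finset α}
    (hT : ↑Tf ⊆ atomsBelow Y) :
    atomsBelow (Y \ Tf.sup id) = atomsBelow Y \ ↑Tf := by
  have hFatoms : ∀ p ∈ Tf, IsAtom p := fun p hp => (hT hp).1
  ext p
  simp only [atomsBelow, Set.mem_setOf_eq, Set.mem_diff, Finset.mem_coe]
  constructor
  · rintro ⟨hp, hle⟩
    rw [le_sdiff] at hle
    refine ⟨⟨hp, hle.1⟩, fun hmem => ?_⟩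
    exact hp.1 (hle.2.eq_bot_of_le (Finset.le_sup (f := id) hmem))
  · rintro ⟨⟨hp, hle⟩, hnotmem⟩
    refine ⟨hp, le_sdiff.mpr ⟨hle, ?_⟩⟩
    rw [disjoint_iff]
    rcases hp.le_iff.mp (inf_le_left : p ⊓ Tf.sup id ≤ p) with h | h
    · exact h
    · exact absurd ((atom_le_finsetSup hp hFatoms).mp (h.ge.trans inf_le_right)) hnotmem

lemma finsetSup_le_of_atomsBelow {α : Type*} [GeneralizedBooleanAlgebra α] {Y : α}
    {Tf : Finset α} (hT : ↑Tf ⊆ atomsBelow Y) : Tf.sup id ≤ Y :=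
  Finset.sup_le fun p hp => (hT hp).2

/-- Core splitting lemma: given cells with matching counts and a splitting element `c`
on the left, produce a matching splitting on the right. -/
lemma exists_split
    (hsplitβ : ∀ u : β, InfiniteElt u →
      ∃ v w : β, InfiniteElt v ∧ InfiniteElt w ∧ v ⊓ w = ⊥ ∧ v ⊔ w = u)
    {X : α} {Y : β} (hXY : SameAtomCount' X Y) (c : α) :
    ∃ dS : β, dS ≤ Y ∧ SameAtomCount' (X ⊓ c) dS ∧ SameAtomCount' (X \ c) (Y \ dS) := by
  classical
  have hsup : (X ⊓ c) ⊔ (X \ c) = X := sup_inf_sdiff X c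
  have hinfbot : (X ⊓ c) ⊓ (X \ c) = ⊥ := inf_inf_sdiff X c
  obtain ⟨hAXeq, hAXdisj⟩ := atomsBelow_sup_disjoint hinfbot
  rw [hsup] at hAXeq
  set A1 := atomsBelow (X ⊓ c) with hA1
  set A2 := atomsBelow (X \ c) with hA2
  by_cases hfin : (atomsBelow X).Finite
  · -- everything finite
    have hAY : (atomsBelow Y).Finite := hXY.1.mp hfin
    have hA1f : A1.Finite := hfin.subset (hAXeq ▸ Set.subset_union_left)
    have hA2f : A2.Finite := hfin.subset (hAXeq ▸ Set.subset_union_right)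
    have hcard : (atomsBelow X).ncard = A1.ncard + A2.ncard := by
      rw [hAXeq]; exact Set.ncard_union_eq hAXdisj hA1f hA2f
    have hj : A1.ncard ≤ (atomsBelow Y).ncard := by
      rw [← hXY.2, hcard]; omega
    obtain ⟨T, hTsub, hTcard⟩ := Set.exists_subset_card_eq hj
    have hTfin : T.Finite := hAY.subset hTsub
    set Tf := hTfin.toFinset with hTf
    have hTf_sub : ↑Tf ⊆ atomsBelow Y := by
      rw [hTf]; intro p hp
      exact hTsub (hTfin.mem_toFinset.mp hp)
    have hTf_atoms : ∀ p ∈ Tf, IsAtom p := fun p hp => (hTf_sub hp).1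
    refine ⟨Tf.sup id, finsetSup_le_of_atomsBelow hTf_sub, ?_, ?_⟩
    · refine sac_of_finite hA1f (by rw [atomsBelow_finsetSup hTf_atoms]; exact Tf.finite_toSet) ?_
      rw [atomsBelow_finsetSup hTf_atoms, hTfin.coe_toFinset]
      exact hTcard.symm
    · have heq : atomsBelow (Y \ Tf.sup id) = atomsBelow Y \ ↑Tf := atomsBelow_sdiff_sup hTf_sub
      have hTcoe : (↑Tf : Set β) = T := hTfin.coe_toFinset
      refine sac_of_finite hA2f ?_ ?_
      · rw [heq]; exact hAY.diff
      · rw [heq, hTcoe, Set.ncard_diff hTsub hTfin, ← hXY.2, hcard, hTcard, ← hA2]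
        omega
  · -- X has infinitely many atoms
    have hAXinf : (atomsBelow X).Infinite := hfin
    have hAYinf : (atomsBelow Y).Infinite := fun h => hfin (hXY.1.mpr h)
    by_cases hA1f : A1.Finite
    · -- A1 finite, A2 must be infinite
      have hA2inf : A2.Infinite := by
        intro hA2f
        exact hfin (hAXeq ▸ hA1f.union hA2f)
      obtain ⟨Tf, hTsub, hTcard⟩ := hAYinf.exists_subset_card_eq A1.ncard
      have hTf_atoms : ∀ p ∈ Tf, IsAtom p := fun p hp => (hTsub hp).1
      refine ⟨Tf.sup id, finsetSup_le_of_atomsBelow hTsub, ?_, ?_⟩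
      · refine sac_of_finite hA1f (by rw [atomsBelow_finsetSup hTf_atoms]; exact Tf.finite_toSet) ?_
        rw [atomsBelow_finsetSup hTf_atoms, Set.ncard_coe_finset, hTcard]
      · refine sac_of_infinite hA2inf ?_
        rw [atomsBelow_sdiff_sup hTsub]
        exact hAYinf.diff Tf.finite_toSet
    · by_cases hA2f : A2.Finite
      · -- A1 infinite, A2 finite
        have hA1inf : A1.Infinite := hA1f
        obtain ⟨Tf, hTsub, hTcard⟩ := hAYinf.exists_subset_card_eq A2.ncard
        have hTf_atoms : ∀ p ∈ Tf, IsAtom p := fun p hp => (hTsub hp).1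
        have hsle : Tf.sup id ≤ Y := finsetSup_le_of_atomsBelow hTsub
        refine ⟨Y \ Tf.sup id, sdiff_le, ?_, ?_⟩
        · refine sac_of_infinite hA1inf ?_
          rw [atomsBelow_sdiff_sup hTsub]
          exact hAYinf.diff Tf.finite_toSet
        · rw [sdiff_sdiff_right_self, inf_of_le_right hsle]
          refine sac_of_finite hA2f (by rw [atomsBelow_finsetSup hTf_atoms]; exact Tf.finite_toSet) ?_
          rw [atomsBelow_finsetSup hTf_atoms, Set.ncard_coe_finset, hTcard]
      · -- both infinite
        have hYinf : InfiniteElt Y := infiniteElt_iff.mpr hAYinf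
        obtain ⟨v, w, hv, hw, hvw, hvwY⟩ := hsplitβ Y hYinf
        refine ⟨v, le_sup_left.trans hvwY.le, ?_, ?_⟩
        · exact sac_of_infinite hA1f (infiniteElt_iff.mp hv)
        · have hdwv : Disjoint w v := disjoint_iff.mpr (by rwa [inf_comm] at hvw)
          have hYv : Y \ v = w := by
            rw [← hvwY, sup_sdiff, sdiff_self, bot_sup_eq, hdwv.sdiff_eq_left]
          rw [hYv]
          exact sac_of_infinite hA2f (infiniteElt_iff.mp hw)

end Two

section Outside
variable {α β : Type*} [GeneralizedBooleanAlgebra α] [GeneralizedBooleanAlgebra β]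
  [IsAtomic α] [IsAtomic β]

lemma exists_outside
    (hdisjβ : ∀ x : β, ∃ u : β, InfiniteElt u ∧ x ⊓ u = ⊥)
    (z : β) (x0 : α) :
    ∃ e : β, e ⊓ z = ⊥ ∧ SameAtomCount' x0 e := by
  classical
  obtain ⟨u, hu, huz⟩ := hdisjβ z
  have huinf : (atomsBelow u).Infinite := infiniteElt_iff.mp hu
  by_cases hfin : (atomsBelow x0).Finite
  · obtain ⟨Tf, hTsub, hTcard⟩ := huinf.exists_subset_card_eq (atomsBelow x0).ncard
    have hTf_atoms : ∀ p ∈ Tf, IsAtom p := fun p hp => (hTsub hp).1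
    refine ⟨Tf.sup id, ?_, ?_⟩
    · have hle : Tf.sup id ≤ u := finsetSup_le_of_atomsBelow hTsub
      have h1 : Tf.sup id ⊓ z ≤ u ⊓ z := inf_le_inf_right z hle
      have h2 : u ⊓ z = ⊥ := by rw [inf_comm]; exact huz
      exact le_bot_iff.mp (h1.trans h2.le)
    · refine sac_of_finite hfin (by rw [atomsBelow_finsetSup hTf_atoms]; exact Tf.finite_toSet) ?_
      rw [atomsBelow_finsetSup hTf_atoms, Set.ncard_coe_finset, hTcard]
  · refine ⟨u, by rw [inf_comm]; exact huz, sac_of_infinite hfin huinf⟩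

end Outside

lemma sac_eq {α β : Type*} [GeneralizedBooleanAlgebra α] [GeneralizedBooleanAlgebra β]
    {x : α} {y : β} : SameAtomCount x y ↔ SameAtomCount' x y := Iff.rfl

lemma vennCell_eq {α : Type*} [GeneralizedBooleanAlgebra α] {n : ℕ} (a : Fin n → α)
    (S : Finset (Fin n)) (hS : S.Nonempty) : vennCell a S hS = vennCell' a S hS := rfl


/-- The back-and-forth extension lemma: in atomic generalized Boolean algebras with no
top, in which every infinite element splits into two disjoint infinite elements and
every element is disjoint from some infinite element, any tuples with matching cell
invariants can be extended by one more element on either side preserving the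
invariants. -/
theorem stmt19 {α β : Type*} [GeneralizedBooleanAlgebra α] [GeneralizedBooleanAlgebra β]
    [IsAtomic α] [IsAtomic β]
    (htopα : ¬ ∃ t : α, ∀ x : α, x ≤ t) (htopβ : ¬ ∃ t : β, ∀ x : β, x ≤ t)
    (hsplitα : ∀ u : α, InfiniteElt u →
      ∃ v w : α, InfiniteElt v ∧ InfiniteElt w ∧ v ⊓ w = ⊥ ∧ v ⊔ w = u)
    (hsplitβ : ∀ u : β, InfiniteElt u →
      ∃ v w : β, InfiniteElt v ∧ InfiniteElt w ∧ v ⊓ w = ⊥ ∧ v ⊔ w = u)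
    (hdisjα : ∀ x : α, ∃ u : α, InfiniteElt u ∧ x ⊓ u = ⊥)
    (hdisjβ : ∀ x : β, ∃ u : β, InfiniteElt u ∧ x ⊓ u = ⊥)
    {n : ℕ} (a : Fin n → α) (b : Fin n → β)
    (hab : MatchingInvariants a b) (c : α) :
    ∃ d : β, MatchingInvariants (Fin.snoc a c) (Fin.snoc b d) := by
  classical
  obtain ⟨e, hez, he⟩ := exists_outside hdisjβ (Finset.univ.sup b) (c \ Finset.univ.sup a)
  choose dS hdSle hdS1 hdS2 using
    fun (S : Finset (Fin n)) (hS : S.Nonempty) =>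
      exists_split hsplitβ
        ((sac_eq.mp (hab S hS)) : SameAtomCount' (vennCell' a S hS) (vennCell' b S hS)) c
  set D : Finset (Fin n) → β := fun S => if h : S.Nonempty then dS S h else ⊥ with hD
  set d : β := e ⊔ Finset.univ.sup D with hd
  have hcell_le_supb : ∀ (S : Finset (Fin n)) (hS : S.Nonempty),
      vennCell' b S hS ≤ Finset.univ.sup b := by
    intro S hS
    obtain ⟨i, hi⟩ := hS
    exact (vennCell'_le _ hi).trans (Finset.le_sup (Finset.mem_univ i))
  have hD_le_supb : ∀ T : Finset (Fin n), D T ≤ Finset.univ.sup b := by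
    intro T
    rw [hD]
    by_cases h : T.Nonempty
    · simp only [h, dif_pos]
      exact (hdSle T h).trans (hcell_le_supb T h)
    · simp only [h, dif_neg, not_false_iff]
      exact bot_le
  have key : ∀ (S : Finset (Fin n)) (hS : S.Nonempty),
      d ⊓ vennCell' b S hS = dS S hS := by
    intro S hS
    rw [hd, inf_sup_right, Finset.sup_inf_distrib_right]
    have h1 : e ⊓ vennCell' b S hS = ⊥ := by
      have : e ⊓ vennCell' b S hS ≤ e ⊓ Finset.univ.sup b :=
        inf_le_inf_left e (hcell_le_supb S hS)
      exact le_bot_iff.mp (this.trans hez.le)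
    rw [h1, bot_sup_eq]
    apply le_antisymm
    · refine Finset.sup_le fun T _ => ?_
      by_cases h : T.Nonempty
      · simp only [hD, h, dif_pos]
        by_cases hTS : T = S
        · subst hTS
          exact inf_le_left
        · have := vennCell'_disjoint (a := b) h hS hTS
          have h2 : dS T h ⊓ vennCell' b S hS ≤ vennCell' b T h ⊓ vennCell' b S hS :=
            inf_le_inf_right _ (hdSle T h)
          rw [(this.le_bot.antisymm bot_le ▸ rfl : vennCell' b T h ⊓ vennCell' b S hS = ⊥)] at h2
          exact h2.trans bot_le
      · simp only [hD, h, dif_neg, not_false_iff]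
        rw [bot_inf_eq]
        exact bot_le
    · have h3 : D S ⊓ vennCell' b S hS ≤ Finset.univ.sup (fun T => D T ⊓ vennCell' b S hS) :=
        Finset.le_sup (f := fun T => D T ⊓ vennCell' b S hS) (Finset.mem_univ S)
      have h4 : D S ⊓ vennCell' b S hS = dS S hS := by
        rw [hD]
        simp only [hS, dif_pos]
        exact inf_eq_left.mpr (hdSle S hS)
      rwa [h4] at h3
  have hd_out : d \ Finset.univ.sup b = e := by
    apply le_antisymm
    · have h1 : d ≤ e ⊔ Finset.univ.sup b := by
        rw [hd]
        exact sup_le le_sup_left ((Finset.sup_le fun T _ => hD_le_supb T).trans le_sup_right)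
      calc d \ Finset.univ.sup b ≤ (e ⊔ Finset.univ.sup b) \ Finset.univ.sup b :=
            sdiff_le_sdiff_right h1
        _ = e \ Finset.univ.sup b := by rw [sup_sdiff, sdiff_self, sup_bot_eq]
        _ ≤ e := sdiff_le
    · exact le_sdiff.mpr ⟨le_sup_left, disjoint_iff.mpr hez⟩
  refine ⟨d, ?_⟩
  intro T hT
  rcases finset_fin_succ_cases T hT with ⟨S, hS, rfl⟩ | rfl | ⟨S, hS, rfl⟩
  · -- last ∉ T : cells are X \ c and Y \ d
    rw [sac_eq, vennCell_eq, vennCell_eq, vennCell'_snoc_notlast a c S hS hT,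
      vennCell'_snoc_notlast b d S hS hT]
    have hYd : vennCell' b S hS \ d = vennCell' b S hS \ dS S hS := by
      rw [← key S hS, sdiff_inf, sdiff_self, sup_bot_eq]
    rw [hYd]
    exact hdS2 S hS
  · -- T = {last}
    rw [sac_eq, vennCell_eq, vennCell_eq, vennCell'_snoc_last a c hT,
      vennCell'_snoc_last b d hT, hd_out]
    exact he
  · -- last ∈ T, rest nonempty : cells are X ⊓ c and Y ⊓ d
    rw [sac_eq, vennCell_eq, vennCell_eq, vennCell'_snoc_last_mem a c S hS hT,
      vennCell'_snoc_last_mem b d S hS hT]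
    rw [inf_comm _ d, key S hS]
    exact hdS1 S hS
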